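/- Let A ∈ ℝ^{n×n}, C ∈ ℝ^{n_y×n}. Suppose there exist a diagonal positive definite matrix P ∈ ℝ^{n×n} with nonnegative entries, Y ∈ ℝ^{n×n_y}, and an entrywise-nonnegative X ∈ ℝ^{n×n} such that the block matrix [[P, X],[Xᵀ, P]] is positive definite and |P A − Y C| ≤ X componentwise. Then L = P^{-1} Y satisfies ρ(|A − L C|) < 1. -/

import Mathlib

open Matrix Finset

noncomputable section

/-- Entrywise absolute value of a matrix. -/
def entAbs {m n : Type*} (A : Matrix m n ℝ) : Matrix m n ℝ := fun i j => |A i j|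

/-- Spectral radius of a real matrix, via its complex spectrum. -/
def specRad {n : Type*} [Fintype n] [DecidableEq n] (A : Matrix n n ℝ) : ENNReal :=
  spectralRadius ℂ (A.map (algebraMap ℝ ℂ))
theorem lmi_implies_abs_schur {n ny : ℕ}
    (A : Matrix (Fin n) (Fin n) ℝ) (C : Matrix (Fin ny) (Fin n) ℝ)
    (P : Matrix (Fin n) (Fin n) ℝ) (Y : Matrix (Fin n) (Fin ny) ℝ)
    (X : Matrix (Fin n) (Fin n) ℝ)
    (hPdiag : P.IsDiag) (hPdef : P.PosDef) (hPnn : ∀ i j, 0 ≤ P i j)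
    (hXnn : ∀ i j, 0 ≤ X i j)
    (hblk : (Matrix.fromBlocks P X Xᵀ P).PosDef)
    (hle : ∀ i j, |(P * A - Y * C) i j| ≤ X i j) :
    specRad (entAbs (A - P⁻¹ * Y * C)) < 1 := by
  classical
  set d : Fin n → ℝ := fun i => P i i with hd
  have hPd : Matrix.diagonal d = P := hPdiag.diagonal_diag
  have hdpos : ∀ i, 0 < d i := by
    intro i
    have hne : (Pi.single i 1 : Fin n → ℝ) ≠ 0 := by
      intro h
      have := congrFun h i
      simp [Pi.single_eq_same] at this
    have h := hPdef.dotProduct_mulVec_pos (x := Pi.single i 1) hne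
    have hPmv : P *ᵥ Pi.single i 1 = fun j => P j i := by
      ext j
      simp [Matrix.mulVec_single]
    rw [hPmv] at h
    simpa [dotProduct, Pi.single_apply] using h
  have hPdet : IsUnit P.det := isUnit_iff_ne_zero.mpr hPdef.det_pos.ne'
  haveI : Invertible P := P.invertibleOfIsUnitDet hPdet
  have hPinv : P⁻¹ = Matrix.diagonal fun i => (d i)⁻¹ := by
    apply Matrix.inv_eq_right_inv
    rw [← hPd, Matrix.diagonal_mul_diagonal]
    have h1 : (fun i => d i * (d i)⁻¹) = fun _ : Fin n => (1 : ℝ) :=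
      funext fun i => mul_inv_cancel₀ (hdpos i).ne'
    rw [h1, Matrix.diagonal_one]
  set Z : Matrix (Fin n) (Fin n) ℝ := P * A - Y * C with hZ
  have hAZ : A - P⁻¹ * Y * C = P⁻¹ * Z := by
    rw [hZ, Matrix.mul_sub, ← Matrix.mul_assoc, Matrix.nonsing_inv_mul P hPdet,
      Matrix.one_mul, Matrix.mul_assoc]
  set M : Matrix (Fin n) (Fin n) ℝ := entAbs (A - P⁻¹ * Y * C) with hM
  have hMent : ∀ i j, M i j = (d i)⁻¹ * |Z i j| := by
    intro i j
    rw [hM, entAbs, hAZ, hPinv, Matrix.diagonal_mul,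
      abs_mul, abs_of_nonneg (inv_nonneg.mpr (hdpos i).le)]
  have hMnn : ∀ i j, 0 ≤ M i j := fun i j => by
    rw [hMent]
    exact mul_nonneg (inv_nonneg.mpr (hdpos i).le) (abs_nonneg _)
  have hMX : ∀ i j, M i j ≤ (d i)⁻¹ * X i j := fun i j => by
    rw [hMent]
    exact mul_le_mul_of_nonneg_left (hle i j) (inv_nonneg.mpr (hdpos i).le)
  -- Schur complement strict inequality
  have hschur : ∀ u : Fin n → ℝ, u ≠ 0 →
      (∑ i, (d i)⁻¹ * (X *ᵥ u) i ^ 2) < ∑ i, d i * u i ^ 2 := by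
    intro u hu
    have hz : ((-((P⁻¹ * X) *ᵥ u)) ⊕ᵥ u) ≠ 0 := by
      intro h
      exact hu (funext fun i => congrFun h (Sum.inr i))
    have h := hblk.dotProduct_mulVec_pos hz
    rw [show (Xᵀ : Matrix (Fin n) (Fin n) ℝ) = Xᴴ from
        (Matrix.conjTranspose_eq_transpose_of_trivial X).symm] at h
    rw [Matrix.dotProduct_mulVec,
      Matrix.schur_complement_eq₁₁ X P (-((P⁻¹ * X) *ᵥ u)) u hPdef.1,
      neg_add_cancel] at h
    simp only [star_trivial, Matrix.zero_vecMul, zero_dotProduct, zero_add] at h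
    have hq : u ᵥ* (P - Xᴴ * P⁻¹ * X) ⬝ᵥ u
        = (∑ i, d i * u i ^ 2) - ∑ i, (d i)⁻¹ * (X *ᵥ u) i ^ 2 := by
      rw [Matrix.vecMul_sub, sub_dotProduct]
      congr 1
      · rw [← Matrix.dotProduct_mulVec, ← hPd]
        simp only [dotProduct, Matrix.mulVec_diagonal]
        exact Finset.sum_congr rfl fun i _ => by ring
      · rw [← Matrix.dotProduct_mulVec,
          show (Xᴴ : Matrix (Fin n) (Fin n) ℝ) = Xᵀ from
            Matrix.conjTranspose_eq_transpose_of_trivial X,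
          Matrix.mul_assoc, ← Matrix.mulVec_mulVec, Matrix.dotProduct_mulVec,
          Matrix.vecMul_transpose, ← Matrix.mulVec_mulVec, hPinv]
        simp only [dotProduct, Matrix.mulVec_diagonal]
        exact Finset.sum_congr rfl fun i _ => by ring
    rw [hq] at h
    linarith
  -- eigenvalue bound
  set Mc : Matrix (Fin n) (Fin n) ℂ := M.map (algebraMap ℝ ℂ) with hMc
  have key : ∀ μ ∈ spectrum ℂ Mc, ‖μ‖₊ < 1 := by
    intro μ hμ
    have hμ' : μ ∈ spectrum ℂ (Matrix.toLinAlgEquiv' Mc) := by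
      rwa [AlgEquiv.spectrum_eq]
    have hev : Module.End.HasEigenvalue (Matrix.toLinAlgEquiv' Mc) μ :=
      Module.End.hasEigenvalue_iff_mem_spectrum.mpr hμ'
    obtain ⟨v, hv⟩ := hev.exists_hasEigenvector
    have hveq : Mc *ᵥ v = μ • v := by
      have h : Matrix.toLin' Mc v = μ • v := hv.apply_eq_smul
      rwa [Matrix.toLin'_apply] at h
    set u : Fin n → ℝ := fun i => ‖v i‖ with hu
    have hunn : ∀ i, 0 ≤ u i := fun i => norm_nonneg _
    have hune : u ≠ 0 := by
      intro h
      apply hv.2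
      funext i
      have := congrFun h i
      simpa [hu] using this
    have step1 : ∀ i, ‖μ‖ * u i ≤ (d i)⁻¹ * (X *ᵥ u) i := by
      intro i
      have h1 : ‖μ‖ * u i = ‖(Mc *ᵥ v) i‖ := by
        rw [hveq]
        simp [hu, Pi.smul_apply, norm_mul]
      have h2 : ‖(Mc *ᵥ v) i‖ ≤ ∑ j, M i j * u j := by
        calc ‖(Mc *ᵥ v) i‖ = ‖∑ j, Mc i j * v j‖ := by
              simp [Matrix.mulVec, dotProduct]
          _ ≤ ∑ j, ‖Mc i j * v j‖ := norm_sum_le _ _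
          _ = ∑ j, M i j * u j := Finset.sum_congr rfl fun j _ => by
              rw [norm_mul]
              congr 1
              simp [hMc, Matrix.map_apply, Complex.norm_real, abs_of_nonneg (hMnn i j)]
      have h3 : (∑ j, M i j * u j) ≤ (d i)⁻¹ * (X *ᵥ u) i := by
        have : (∑ j, M i j * u j) ≤ ∑ j, (d i)⁻¹ * X i j * u j :=
          Finset.sum_le_sum fun j _ =>
            mul_le_mul_of_nonneg_right (hMX i j) (hunn j)
        refine this.trans_eq ?_
        rw [show (X *ᵥ u) i = ∑ j, X i j * u j from rfl, Finset.mul_sum]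
        exact Finset.sum_congr rfl fun j _ => by ring
      exact h1.le.trans (h2.trans h3)
    have hS : 0 < ∑ i, d i * u i ^ 2 := by
      obtain ⟨i, hi⟩ := Function.ne_iff.mp hune
      refine Finset.sum_pos'
        (fun j _ => mul_nonneg (hdpos j).le (sq_nonneg _))
        ⟨i, Finset.mem_univ i, ?_⟩
      have hui : 0 < u i := lt_of_le_of_ne (hunn i) (Ne.symm (by simpa using hi))
      exact mul_pos (hdpos i) (pow_pos hui 2)
    have hTS := hschur u hune
    have hmain : ‖μ‖ ^ 2 * ∑ i, d i * u i ^ 2 ≤ ∑ i, (d i)⁻¹ * (X *ᵥ u) i ^ 2 := by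
      rw [Finset.mul_sum]
      refine Finset.sum_le_sum fun i _ => ?_
      have h1 : ‖μ‖ ^ 2 * (d i * u i ^ 2) = d i * (‖μ‖ * u i) ^ 2 := by ring
      have h2 : (‖μ‖ * u i) ^ 2 ≤ ((d i)⁻¹ * (X *ᵥ u) i) ^ 2 :=
        pow_le_pow_left₀ (mul_nonneg (norm_nonneg _) (hunn i)) (step1 i) 2
      have h3 : d i * ((d i)⁻¹ * (X *ᵥ u) i) ^ 2 = (d i)⁻¹ * (X *ᵥ u) i ^ 2 := by
        rw [show d i * ((d i)⁻¹ * (X *ᵥ u) i) ^ 2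
            = (d i * (d i)⁻¹) * ((d i)⁻¹ * (X *ᵥ u) i ^ 2) by ring,
          mul_inv_cancel₀ (hdpos i).ne', one_mul]
      calc ‖μ‖ ^ 2 * (d i * u i ^ 2) = d i * (‖μ‖ * u i) ^ 2 := h1
        _ ≤ d i * ((d i)⁻¹ * (X *ᵥ u) i) ^ 2 :=
            mul_le_mul_of_nonneg_left h2 (hdpos i).le
        _ = (d i)⁻¹ * (X *ᵥ u) i ^ 2 := h3
    have hn2 : ‖μ‖ ^ 2 < 1 := by nlinarith
    have hn : ‖μ‖ < 1 := by nlinarith [norm_nonneg μ]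
    exact_mod_cast hn
  -- conclude
  have hfin := Matrix.finite_spectrum Mc
  have hle1 : specRad M ≤ ((hfin.toFinset.sup fun z => ‖z‖₊ : NNReal) : ENNReal) := by
    rw [specRad, ← hMc, spectralRadius]
    exact iSup₂_le fun k hk => ENNReal.coe_le_coe.mpr
      (Finset.le_sup (hfin.mem_toFinset.mpr hk))
  refine lt_of_le_of_lt hle1 ?_
  rw [show (1 : ENNReal) = ((1 : NNReal) : ENNReal) from rfl, ENNReal.coe_lt_coe]
  exact Finset.sup_lt_iff (by norm_num : (⊥ : NNReal) < 1) |>.mpr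
    fun z hz => key z (hfin.mem_toFinset.mp hz)
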